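/- Let φ : H → (−∞, +∞] be a proper convex lower semicontinuous function on a real Hilbert space H whose set of minimizers F is nonempty. Suppose β_n → ∞, α_n → 0, α_n e_n → 0, and u_n → u. Then the sequence x_{n+1} = argmin_{x∈H} { φ(x) + (1/(2β_n))‖x − (u_n + α_n(x_n + e_n))‖² } converges strongly to P_F u, the projection of u onto the set of minimizers of φ. -/

import Mathlib

set_option linter.unusedSectionVars false
set_option maxHeartbeats 1000000


open scoped RealInnerProductSpace
open Filter Topology

variable {H : Type*} [NormedAddCommGroup H] [InnerProductSpace ℝ H] [CompleteSpace H]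

/-- A (possibly set-valued) operator `A : H → Set H` is monotone. -/
def IsMonotoneOp (A : H → Set H) : Prop :=
  ∀ x₁ y₁ x₂ y₂, y₁ ∈ A x₁ → y₂ ∈ A x₂ → 0 ≤ ⟪x₁ - x₂, y₁ - y₂⟫

/-- `A` is maximal monotone: it is monotone and any pair `[x, y]` monotonically
related to the whole graph of `A` already belongs to the graph of `A`. -/
def IsMaximalMonotone (A : H → Set H) : Prop :=
  IsMonotoneOp A ∧ ∀ x y, (∀ v w, w ∈ A v → 0 ≤ ⟪v - x, w - y⟫) → y ∈ A x

/-- `J` is the resolvent `(I + βA)⁻¹` of `A`: for every `y`, `J y` satisfies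
`(y - J y)/β ∈ A (J y)`, i.e. `y ∈ (I + βA)(J y)`. -/
def IsResolvent (A : H → Set H) (β : ℝ) (J : H → H) : Prop :=
  ∀ y, β⁻¹ • (y - J y) ∈ A (J y)

/-- `p` is the metric projection of `u` onto the set `F`. -/
def IsProjection (F : Set H) (u p : H) : Prop :=
  p ∈ F ∧ ∀ q ∈ F, ‖u - p‖ ≤ ‖u - q‖

/-- `φ` is convex (as an extended-real-valued function). -/
def ERealConvexOn (φ : H → EReal) : Prop :=
  ∀ x y : H, ∀ t : ℝ, 0 ≤ t → t ≤ 1 →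
    φ (t • x + (1 - t) • y) ≤ (t : EReal) * φ x + ((1 - t : ℝ) : EReal) * φ y

lemma aux_div (a b : ℝ) (h : ∀ t : ℝ, 0 < t → t ≤ 1 → 0 ≤ t * (2 * a + t * b)) :
    0 ≤ a := by
  by_contra hneg
  push_neg at hneg
  rcases le_or_gt b 0 with hb | hb
  · nlinarith [h 1 one_pos le_rfl]
  · have ht0 : 0 < min 1 (-a / b) := lt_min one_pos (div_pos (by linarith) hb)
    have h2 : min 1 (-a / b) * b ≤ -a := by
      calc min 1 (-a / b) * b ≤ (-a / b) * b :=
            mul_le_mul_of_nonneg_right (min_le_right _ _) hb.le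
        _ = -a := div_mul_cancel₀ _ hb.ne'
    nlinarith [h (min 1 (-a / b)) ht0 (min_le_left _ _),
      mul_le_mul_of_nonneg_left h2 ht0.le]

lemma inner_nonneg_of_norm_le {v w : H}
    (h : ∀ t : ℝ, 0 < t → t ≤ 1 → ‖v‖ ^ 2 ≤ ‖v + t • w‖ ^ 2) : 0 ≤ ⟪v, w⟫ := by
  apply aux_div _ (‖w‖ ^ 2)
  intro t ht0 ht1
  have h1 : ‖t • w‖ ^ 2 = t ^ 2 * ‖w‖ ^ 2 := by
    rw [norm_smul, mul_pow, Real.norm_eq_abs, sq_abs]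
  have hexp : ‖v + t • w‖ ^ 2 = ‖v‖ ^ 2 + 2 * (t * ⟪v, w⟫) + t ^ 2 * ‖w‖ ^ 2 := by
    rw [norm_add_sq_real, real_inner_smul_right, h1]
  nlinarith [h t ht0 ht1]

lemma sublevel_convex (φ : H → EReal) (hconv : ERealConvexOn φ) (hbot : ∀ z, φ z ≠ ⊥)
    (c : ℝ) : Convex ℝ {w : H | φ w ≤ (c : EReal)} := by
  intro x hx y hy a b ha hb hab
  simp only [Set.mem_setOf_eq] at hx hy ⊢
  have hxt : φ x ≠ ⊤ := ne_top_of_le_ne_top (EReal.coe_ne_top c) hx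
  have hyt : φ y ≠ ⊤ := ne_top_of_le_ne_top (EReal.coe_ne_top c) hy
  set r1 := (φ x).toReal with hr1
  set r2 := (φ y).toReal with hr2
  have hx' : φ x = (r1 : EReal) := (EReal.coe_toReal hxt (hbot x)).symm
  have hy' : φ y = (r2 : EReal) := (EReal.coe_toReal hyt (hbot y)).symm
  have hr1c : r1 ≤ c := by rw [hx'] at hx; exact_mod_cast hx
  have hr2c : r2 ≤ c := by rw [hy'] at hy; exact_mod_cast hy
  have hb' : b = 1 - a := by linarith
  calc φ (a • x + b • y) = φ (a • x + (1 - a) • y) := by rw [hb']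
    _ ≤ (a : EReal) * φ x + ((1 - a : ℝ) : EReal) * φ y := hconv x y a ha (by linarith)
    _ = ((a * r1 + (1 - a) * r2 : ℝ) : EReal) := by
        rw [hx', hy', ← EReal.coe_mul, ← EReal.coe_mul, ← EReal.coe_add]
    _ ≤ (c : EReal) := by
        rw [EReal.coe_le_coe_iff]; nlinarith

lemma mem_of_clusterPt {X : Type*} [TopologicalSpace X] {l : Filter X} {a : X}
    (h : ClusterPt a l) {s : Set X} (hs : IsClosed s) (hl : s ∈ l) : a ∈ s := by
  have : ClusterPt a (𝓟 s) := h.mono (le_principal_iff.mpr hl)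
  rw [← hs.closure_eq]
  exact mem_closure_iff_clusterPt.mpr this

lemma isClosed_weak_preimage {S : Set H} (hS : Convex ℝ S) (hcl : IsClosed S) :
    IsClosed {g : WeakDual ℝ H |
      ((InnerProductSpace.toDual ℝ H).symm (WeakDual.toStrongDual g)) ∈ S} := by
  rw [← isOpen_compl_iff, isOpen_iff_mem_nhds]
  intro g hg
  simp only [Set.mem_compl_iff, Set.mem_setOf_eq] at hg
  obtain ⟨f, c, hfs, hfg⟩ := geometric_hahn_banach_closed_point hS hcl hg
  set v := (InnerProductSpace.toDual ℝ H).symm f with hv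
  have hfv : ∀ w : H, f w = ⟪v, w⟫ := by
    intro w
    rw [← InnerProductSpace.toDual_apply_apply, hv, LinearIsometryEquiv.apply_symm_apply]
  have hopen : IsOpen {g' : WeakDual ℝ H | c < g' v} :=
    isOpen_lt continuous_const (WeakDual.eval_continuous v)
  have hgv : ∀ g' : WeakDual ℝ H,
      g' v = ⟪(InnerProductSpace.toDual ℝ H).symm (WeakDual.toStrongDual g') , v⟫ := by
    intro g'
    rw [← InnerProductSpace.toDual_apply_apply, LinearIsometryEquiv.apply_symm_apply]
    rfl
  refine Filter.mem_of_superset (hopen.mem_nhds ?_) ?_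
  · show c < g v
    rw [hgv g, real_inner_comm, ← hfv]
    exact hfg
  · intro g' hg'
    simp only [Set.mem_setOf_eq] at hg'
    simp only [Set.mem_compl_iff, Set.mem_setOf_eq]
    intro hmem
    have := hfs _ hmem
    rw [hfv, ← real_inner_comm, ← hgv g'] at this
    exact absurd hg' (not_lt.mpr this.le)

/-- Proximal algorithm for minimizing a proper convex lsc function `φ`: the iterates
`x_{n+1} = argmin_x { φ(x) + (1/(2β_n)) ‖x - (u_n + α_n(x_n + e_n))‖² }` converge
strongly to the projection of `u` onto the set of minimizers of `φ`. -/
theorem stmt_7 (φ : H → EReal)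
    (hproper : ∃ z, φ z ≠ ⊤) (hbot : ∀ z, φ z ≠ ⊥)
    (hconv : ERealConvexOn φ) (hlsc : LowerSemicontinuous φ)
    (F : Set H) (hF : F = {z | ∀ w, φ z ≤ φ w}) (hne : F.Nonempty)
    (β : ℕ → ℝ) (hβpos : ∀ n, 0 < β n) (hβ : Tendsto β atTop atTop)
    (α : ℕ → ℝ) (hα : Tendsto α atTop (nhds 0))
    (e : ℕ → H) (hαe : Tendsto (fun n => α n • e n) atTop (nhds 0))
    (useq : ℕ → H) (u : H) (hu : Tendsto useq atTop (nhds u))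
    (x : ℕ → H)
    (hx : ∀ n, ∀ z : H,
      φ (x (n + 1)) +
          ((1 / (2 * β n) * ‖x (n + 1) - (useq n + α n • (x n + e n))‖ ^ 2 : ℝ) : EReal) ≤
        φ z + ((1 / (2 * β n) * ‖z - (useq n + α n • (x n + e n))‖ ^ 2 : ℝ) : EReal))
    (p : H) (hp : IsProjection F u p) :
    Tendsto x atTop (nhds p) := by
  obtain ⟨hpF, hpmin⟩ := hp
  have hminp : ∀ w, φ p ≤ φ w := by rw [hF] at hpF; exact hpF
  obtain ⟨z₀, hz₀⟩ := hproper
  have hpt : φ p ≠ ⊤ := ne_top_of_le_ne_top hz₀ (hminp z₀)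
  set m := (φ p).toReal with hm
  have hmp : φ p = (m : EReal) := (EReal.coe_toReal hpt (hbot p)).symm
  set y : ℕ → H := fun n => useq n + α n • (x n + e n) with hy_def
  have hx' : ∀ n, ∀ z : H,
      φ (x (n + 1)) + ((1 / (2 * β n) * ‖x (n + 1) - y n‖ ^ 2 : ℝ) : EReal) ≤
        φ z + ((1 / (2 * β n) * ‖z - y n‖ ^ 2 : ℝ) : EReal) := hx
  -- finiteness of the values along the sequence
  have hfin : ∀ n, φ (x (n + 1)) ≠ ⊤ := by
    intro n htop
    have h := hx' n p
    rw [htop, EReal.top_add_coe, top_le_iff, hmp, ← EReal.coe_add] at h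
    exact EReal.coe_ne_top _ h
  set r : ℕ → ℝ := fun n => (φ (x (n + 1))).toReal with hr_def
  have hrdef : ∀ n, φ (x (n + 1)) = ((r n : ℝ) : EReal) := fun n =>
    (EReal.coe_toReal (hfin n) (hbot _)).symm
  have hrlb : ∀ n, m ≤ r n := by
    intro n
    have := hminp (x (n + 1))
    rw [hmp, hrdef n, EReal.coe_le_coe_iff] at this
    exact this
  have hrub : ∀ n, r n + 1 / (2 * β n) * ‖x (n + 1) - y n‖ ^ 2 ≤
      m + 1 / (2 * β n) * ‖p - y n‖ ^ 2 := by
    intro n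
    have h := hx' n p
    rw [hrdef n, hmp, ← EReal.coe_add, ← EReal.coe_add, EReal.coe_le_coe_iff] at h
    exact h
  clear_value m r
  -- the key variational inequality
  have hkey : ∀ n, ∀ q : H, (∀ w, φ q ≤ φ w) →
      0 ≤ ⟪x (n + 1) - q, y n - x (n + 1)⟫ := by
    intro n q hq
    have hqm : φ q = (m : EReal) := le_antisymm (hmp ▸ hq p) (hmp ▸ hminp q)
    have h0 : 0 ≤ ⟪x (n + 1) - y n, q - x (n + 1)⟫ := by
      apply inner_nonneg_of_norm_le
      intro t ht0 ht1
      have hzt : φ (t • q + (1 - t) • x (n + 1)) ≤ ((t * m + (1 - t) * r n : ℝ) : EReal) := by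
        calc φ (t • q + (1 - t) • x (n + 1)) ≤
            (t : EReal) * φ q + ((1 - t : ℝ) : EReal) * φ (x (n + 1)) :=
              hconv q (x (n + 1)) t ht0.le ht1
          _ = ((t * m + (1 - t) * r n : ℝ) : EReal) := by
              rw [hqm, hrdef n, ← EReal.coe_mul, ← EReal.coe_mul, ← EReal.coe_add]
      have h2 : ((r n + 1 / (2 * β n) * ‖x (n + 1) - y n‖ ^ 2 : ℝ) : EReal) ≤
          (((t * m + (1 - t) * r n) +
            1 / (2 * β n) * ‖t • q + (1 - t) • x (n + 1) - y n‖ ^ 2 : ℝ) : EReal) := by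
        rw [EReal.coe_add, EReal.coe_add, ← hrdef n]
        calc φ (x (n + 1)) + ((1 / (2 * β n) * ‖x (n + 1) - y n‖ ^ 2 : ℝ) : EReal) ≤
            φ (t • q + (1 - t) • x (n + 1)) +
              ((1 / (2 * β n) * ‖t • q + (1 - t) • x (n + 1) - y n‖ ^ 2 : ℝ) : EReal) :=
              hx' n _
          _ ≤ _ := add_le_add_left hzt _
      rw [EReal.coe_le_coe_iff] at h2
      have hvec : t • q + (1 - t) • x (n + 1) - y n =
          (x (n + 1) - y n) + t • (q - x (n + 1)) := by module
      rw [hvec] at h2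
      have hco : 0 < 1 / (2 * β n) := by have := hβpos n; positivity
      nlinarith [h2, mul_le_mul_of_nonneg_left (hrlb n) ht0.le]
    calc (0:ℝ) ≤ ⟪x (n + 1) - y n, q - x (n + 1)⟫ := h0
      _ = ⟪x (n + 1) - q, y n - x (n + 1)⟫ := by
          rw [real_inner_comm, ← inner_neg_neg (𝕜 := ℝ), neg_sub, neg_sub, real_inner_comm]
  -- Fejér monotonicity
  have hinner_decomp : ∀ n (q : H), ⟪x (n + 1) - q, y n - q⟫ =
      ⟪x (n + 1) - q, y n - x (n + 1)⟫ + ‖x (n + 1) - q‖ ^ 2 := by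
    intro n q
    rw [← real_inner_self_eq_norm_sq, ← inner_add_right]
    congr 1
    module
  have hfejer : ∀ n, ∀ q : H, (∀ w, φ q ≤ φ w) → ‖x (n + 1) - q‖ ≤ ‖y n - q‖ := by
    intro n q hq
    have h0 := hkey n q hq
    have h1 := hinner_decomp n q
    have h2 := real_inner_le_norm (x (n + 1) - q) (y n - q)
    nlinarith [norm_nonneg (x (n + 1) - q), norm_nonneg (y n - q)]
  -- boundedness
  obtain ⟨Cu, hCu⟩ : ∃ C, ∀ n, ‖useq n - p‖ ≤ C := by
    have h1 : Tendsto (fun n => ‖useq n - p‖) atTop (𝓝 ‖u - p‖) :=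
      (hu.sub tendsto_const_nhds).norm
    obtain ⟨C, hC⟩ := h1.bddAbove_range
    exact ⟨C, fun n => hC ⟨n, rfl⟩⟩
  obtain ⟨Ce, hCe⟩ : ∃ C, ∀ n, ‖α n • e n‖ ≤ C := by
    obtain ⟨C, hC⟩ := hαe.norm.bddAbove_range
    exact ⟨C, fun n => hC ⟨n, rfl⟩⟩
  have hCu0 : 0 ≤ Cu := le_trans (norm_nonneg _) (hCu 0)
  have hCe0 : 0 ≤ Ce := le_trans (norm_nonneg _) (hCe 0)
  obtain ⟨N, hN⟩ : ∃ N, ∀ n ≥ N, |α n| ≤ 1 / 2 := by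
    have habs : Tendsto (fun n => |α n|) atTop (𝓝 0) := by simpa using hα.abs
    exact eventually_atTop.mp (habs.eventually_le_const (by norm_num : (0:ℝ) < 1/2))
  set D : ℝ := Cu + Ce + ‖p‖ / 2 with hD_def
  have hstep : ∀ n, N ≤ n → ‖x (n + 1) - p‖ ≤ D + ‖x n - p‖ / 2 := by
    intro n hn
    have h1 := hfejer n p hminp
    have h2 : y n - p = (useq n - p) + (α n • x n + α n • e n) := by
      simp only [hy_def]; module
    have h3 : ‖y n - p‖ ≤ ‖useq n - p‖ + (‖α n • x n‖ + ‖α n • e n‖) := by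
      rw [h2]
      exact le_trans (norm_add_le _ _) (by gcongr; exact norm_add_le _ _)
    have h4 : ‖α n • x n‖ ≤ 1 / 2 * (‖x n - p‖ + ‖p‖) := by
      rw [norm_smul, Real.norm_eq_abs]
      have h5 : ‖x n‖ ≤ ‖x n - p‖ + ‖p‖ := by
        calc ‖x n‖ = ‖(x n - p) + p‖ := by rw [sub_add_cancel]
          _ ≤ ‖x n - p‖ + ‖p‖ := norm_add_le _ _
      exact mul_le_mul (hN n hn) h5 (norm_nonneg _) (by norm_num)
    have := hCu n
    have := hCe n
    rw [hD_def]
    linarith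
  set B : ℝ := max ‖x N - p‖ (2 * D) with hB_def
  have hDB : 2 * D ≤ B := le_max_right _ _
  have hB0 : 0 ≤ B := le_trans (norm_nonneg _) (le_max_left _ _)
  clear_value D B
  have hbound : ∀ n, N ≤ n → ‖x n - p‖ ≤ B := by
    intro n hn
    induction n, hn using Nat.le_induction with
    | base => rw [hB_def]; exact le_max_left _ _
    | succ n hn ih =>
      have := hstep n hn
      linarith
  -- y tends to u
  have hαx : Tendsto (fun n => α n • x n) atTop (𝓝 0) := by
    have hg0 : Tendsto (fun n => |α n| * (B + ‖p‖)) atTop (𝓝 0) := by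
      have := hα.abs.mul_const (B + ‖p‖)
      simpa using this
    apply squeeze_zero_norm' _ hg0
    filter_upwards [eventually_ge_atTop N] with n hn
    rw [norm_smul, Real.norm_eq_abs]
    have h5 : ‖x n‖ ≤ B + ‖p‖ := by
      calc ‖x n‖ = ‖(x n - p) + p‖ := by rw [sub_add_cancel]
        _ ≤ ‖x n - p‖ + ‖p‖ := norm_add_le _ _
        _ ≤ B + ‖p‖ := by linarith [hbound n hn]
    exact mul_le_mul_of_nonneg_left h5 (abs_nonneg _)
  have hytend : Tendsto y atTop (𝓝 u) := by
    have h1 : Tendsto (fun n => useq n + (α n • x n + α n • e n)) atTop (𝓝 (u + (0 + 0))) :=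
      hu.add (hαx.add hαe)
    have h2 : (fun n => useq n + (α n • x n + α n • e n)) = y := by
      funext n; simp only [hy_def]; rw [smul_add]
    rw [h2] at h1
    simpa using h1
  -- 1/(2 β n) → 0
  have hβinv : Tendsto (fun n => 1 / (2 * β n)) atTop (𝓝 0) := by
    have h2β : Tendsto (fun n => 2 * β n) atTop atTop :=
      hβ.const_mul_atTop (by norm_num : (0:ℝ) < 2)
    have heq : (fun n => 1 / (2 * β n)) = fun n => ((2:ℝ) * β n)⁻¹ := by
      funext n; rw [one_div]
    rw [heq]
    exact h2β.inv_tendsto_atTop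
  -- φ(x (n+1)) → m
  have hrtend : Tendsto r atTop (𝓝 m) := by
    have hub : ∀ n, r n ≤ m + 1 / (2 * β n) * ‖p - y n‖ ^ 2 := by
      intro n
      have h1 := hrub n
      have hco : 0 ≤ 1 / (2 * β n) := by have := hβpos n; positivity
      nlinarith [sq_nonneg ‖x (n + 1) - y n‖, mul_nonneg hco (sq_nonneg ‖x (n + 1) - y n‖)]
    have hupper : Tendsto (fun n => m + 1 / (2 * β n) * ‖p - y n‖ ^ 2) atTop (𝓝 m) := by
      have h1 : Tendsto (fun n => ‖p - y n‖ ^ 2) atTop (𝓝 (‖p - u‖ ^ 2)) :=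
        ((tendsto_const_nhds.sub hytend).norm).pow 2
      have h2 := (tendsto_const_nhds (x := m) (f := atTop (α := ℕ))).add (hβinv.mul h1)
      simpa using h2
    exact tendsto_of_tendsto_of_tendsto_of_le_of_le tendsto_const_nhds hupper hrlb hub
  -- projection inequality
  have hproj : ∀ q : H, (∀ w, φ q ≤ φ w) → ⟪q - p, u - p⟫ ≤ 0 := by
    intro q hq
    have hqm : φ q = (m : EReal) := le_antisymm (hmp ▸ hq p) (hmp ▸ hminp q)
    have h0 : 0 ≤ ⟪u - p, p - q⟫ := by
      apply inner_nonneg_of_norm_le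
      intro t ht0 ht1
      have hmem : t • q + (1 - t) • p ∈ F := by
        rw [hF]
        intro w
        calc φ (t • q + (1 - t) • p) ≤
            (t : EReal) * φ q + ((1 - t : ℝ) : EReal) * φ p :=
              hconv q p t ht0.le ht1
          _ = ((t * m + (1 - t) * m : ℝ) : EReal) := by
              rw [hqm, hmp, ← EReal.coe_mul, ← EReal.coe_mul, ← EReal.coe_add]
          _ = ((m : ℝ) : EReal) := by
              rw [EReal.coe_eq_coe_iff]; ring
          _ = φ p := hmp.symm
          _ ≤ φ w := hminp w
      have h1 := hpmin _ hmem
      have hvec : u - (t • q + (1 - t) • p) = (u - p) + t • (p - q) := by module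
      rw [hvec] at h1
      exact pow_le_pow_left₀ (norm_nonneg _) h1 2
    have h2 : ⟪u - p, p - q⟫ = -⟪q - p, u - p⟫ := by
      rw [← neg_sub q p, inner_neg_right, real_inner_comm]
    linarith [h2 ▸ h0]
  -- the limsup claim
  have hlim : ∀ δ : ℝ, 0 < δ → ∀ᶠ n in atTop, ⟪x (n + 1) - p, u - p⟫ < δ := by
    intro δ hδ
    by_contra hcon
    rw [Filter.not_eventually] at hcon
    have hcon' : ∃ᶠ n in atTop, δ ≤ ⟪x (n + 1) - p, u - p⟫ :=
      hcon.mono fun n h => not_lt.mp h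
    obtain ⟨ψ, hψmono, hψ⟩ := Filter.extraction_of_frequently_atTop hcon'
    set W : H → WeakDual ℝ H :=
      fun w => StrongDual.toWeakDual (InnerProductSpace.toDual ℝ H w) with hW_def
    have hWnd : ∀ w : H, WeakDual.toStrongDual (W w) = InnerProductSpace.toDual ℝ H w :=
      fun w => rfl
    have hWapp : ∀ w v : H, W w v = ⟪w, v⟫ := fun w v => InnerProductSpace.toDual_apply_apply
    set Mb : ℝ := B + ‖p‖ with hMb_def
    have hvb : ∀ᶠ k in atTop,
        W (x (ψ k + 1)) ∈ WeakDual.toStrongDual ⁻¹' Metric.closedBall 0 Mb := by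
      filter_upwards [eventually_ge_atTop N] with k hk
      have hkN : N ≤ ψ k + 1 := le_trans (le_trans hk hψmono.le_apply) (Nat.le_succ _)
      simp only [Set.mem_preimage, Metric.mem_closedBall, dist_zero_right]
      rw [hWnd]
      rw [(InnerProductSpace.toDual ℝ H).norm_map]
      calc ‖x (ψ k + 1)‖ = ‖(x (ψ k + 1) - p) + p‖ := by rw [sub_add_cancel]
        _ ≤ ‖x (ψ k + 1) - p‖ + ‖p‖ := norm_add_le _ _
        _ ≤ B + ‖p‖ := by linarith [hbound (ψ k + 1) hkN]
    have hK : IsCompact (WeakDual.toStrongDual ⁻¹'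
        Metric.closedBall (0 : StrongDual ℝ H) Mb) :=
      WeakDual.isCompact_closedBall (𝕜 := ℝ) (E := H) 0 Mb
    obtain ⟨g, hgK, hgcl⟩ := hK.exists_mapClusterPt (u := fun k => W (x (ψ k + 1)))
      (le_principal_iff.mpr (mem_map.mpr hvb))
    set q := (InnerProductSpace.toDual ℝ H).symm (WeakDual.toStrongDual g) with hq_def
    have hgq : ∀ v : H, g v = ⟪q, v⟫ := by
      intro v
      rw [hq_def, ← InnerProductSpace.toDual_apply_apply, LinearIsometryEquiv.apply_symm_apply]
      rfl
    -- (a) : δ ≤ ⟪q - p, u - p⟫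
    have hT1 : IsClosed {g' : WeakDual ℝ H | δ + ⟪p, u - p⟫ ≤ g' (u - p)} :=
      isClosed_le continuous_const (WeakDual.eval_continuous (u - p))
    have hga : δ + ⟪p, u - p⟫ ≤ g (u - p) := by
      have hmem : ∀ᶠ k in atTop,
          W (x (ψ k + 1)) ∈ {g' : WeakDual ℝ H | δ + ⟪p, u - p⟫ ≤ g' (u - p)} := by
        filter_upwards with k
        show δ + ⟪p, u - p⟫ ≤ W (x (ψ k + 1)) (u - p)
        rw [hWapp]
        have := hψ k
        rw [inner_sub_left] at this
        linarith
      exact mem_of_clusterPt hgcl hT1 (mem_map.mpr hmem)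
    have hqa : δ ≤ ⟪q - p, u - p⟫ := by
      rw [inner_sub_left]
      rw [hgq] at hga
      linarith
    -- (b) : q is a minimizer
    have hsub : ∀ ε : ℝ, 0 < ε → φ q ≤ ((m + ε : ℝ) : EReal) := by
      intro ε hε
      have hSconv := sublevel_convex φ hconv hbot (m + ε)
      have hScl : IsClosed {w : H | φ w ≤ ((m + ε : ℝ) : EReal)} :=
        hlsc.isClosed_preimage _
      have hT2 := isClosed_weak_preimage hSconv hScl
      have hψt : Tendsto (fun k => r (ψ k)) atTop (𝓝 m) := hrtend.comp hψmono.tendsto_atTop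
      have hmem : ∀ᶠ k in atTop, W (x (ψ k + 1)) ∈ {g' : WeakDual ℝ H |
          ((InnerProductSpace.toDual ℝ H).symm (WeakDual.toStrongDual g')) ∈
            {w : H | φ w ≤ ((m + ε : ℝ) : EReal)}} := by
        filter_upwards [hψt.eventually_le_const (by linarith : m < m + ε)] with k hk
        show ((InnerProductSpace.toDual ℝ H).symm
          (WeakDual.toStrongDual (W (x (ψ k + 1))))) ∈ {w : H | φ w ≤ ((m + ε : ℝ) : EReal)}
        rw [hWnd, LinearIsometryEquiv.symm_apply_apply]
        show φ (x (ψ k + 1)) ≤ ((m + ε : ℝ) : EReal)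
        rw [hrdef (ψ k)]
        exact_mod_cast hk
      have := mem_of_clusterPt hgcl hT2 (mem_map.mpr hmem)
      simpa only [Set.mem_setOf_eq, ← hq_def] using this
    have hqmin : ∀ w, φ q ≤ φ w := by
      have hqt : φ q ≠ ⊤ := ne_top_of_le_ne_top (EReal.coe_ne_top (m + 1)) (hsub 1 one_pos)
      obtain ⟨c, hc⟩ : ∃ c : ℝ, φ q = (c : EReal) :=
        ⟨_, (EReal.coe_toReal hqt (hbot q)).symm⟩
      have hcm : c ≤ m := by
        by_contra hcc
        push_neg at hcc
        have h9 := hsub ((c - m) / 2) (by linarith)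
        rw [hc, EReal.coe_le_coe_iff] at h9
        linarith
      intro w
      calc φ q = (c : EReal) := hc
        _ ≤ ((m : ℝ) : EReal) := by exact_mod_cast hcm
        _ = φ p := hmp.symm
        _ ≤ φ w := hminp w
    have := hproj q hqmin
    linarith
  -- conclusion
  have hshift : Tendsto (fun n => x (n + 1)) atTop (𝓝 p) := by
    rw [tendsto_iff_norm_sub_tendsto_zero]
    rw [Metric.tendsto_atTop]
    intro ε hε
    have hyu : Tendsto (fun n => ‖y n - u‖) atTop (𝓝 0) := by
      have h9 : Tendsto (fun n => y n - u) atTop (𝓝 (u - u)) :=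
        hytend.sub (tendsto_const_nhds (x := u) (f := atTop (α := ℕ)))
      have h10 := h9.norm
      simpa using h10
    have h1 : ∀ᶠ n in atTop, ‖y n - u‖ < ε ^ 2 / (2 * (B + 1)) :=
      hyu.eventually_lt_const (by positivity)
    have h2 := hlim (ε ^ 2 / 2) (by positivity)
    have h3 := eventually_ge_atTop N
    rw [← eventually_atTop]
    filter_upwards [h1, h2, h3] with n hn1 hn2 hn3
    rw [Real.dist_eq, sub_zero, abs_of_nonneg (norm_nonneg _)]
    have hkp := hkey n p hminp
    have hd1 := hinner_decomp n p
    have hd2 : ⟪x (n + 1) - p, y n - p⟫ =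
        ⟪x (n + 1) - p, y n - u⟫ + ⟪x (n + 1) - p, u - p⟫ := by
      rw [← inner_add_right]
      congr 1
      module
    have hbnd : ‖x (n + 1) - p‖ ≤ B := hbound (n + 1) (le_trans hn3 (Nat.le_succ _))
    have hcs : ⟪x (n + 1) - p, y n - u⟫ ≤ ‖x (n + 1) - p‖ * ‖y n - u‖ :=
      real_inner_le_norm _ _
    have hsq : ‖x (n + 1) - p‖ ^ 2 < ε ^ 2 := by
      have hmul : ‖x (n + 1) - p‖ * ‖y n - u‖ ≤ B * (ε ^ 2 / (2 * (B + 1))) := by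
        apply mul_le_mul hbnd hn1.le (norm_nonneg _) hB0
      have hBfrac : B * (ε ^ 2 / (2 * (B + 1))) ≤ ε ^ 2 / 2 := by
        have hB1 : (0:ℝ) < B + 1 := by linarith
        have h1 : B / (B + 1) ≤ 1 := by
          rw [div_le_one hB1]; linarith
        have heq : B * (ε ^ 2 / (2 * (B + 1))) = (B / (B + 1)) * (ε ^ 2 / 2) := by
          field_simp
        rw [heq]
        calc (B / (B + 1)) * (ε ^ 2 / 2) ≤ 1 * (ε ^ 2 / 2) :=
              mul_le_mul_of_nonneg_right h1 (by positivity)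
          _ = ε ^ 2 / 2 := one_mul _
      nlinarith [hkp, hd1, hd2, hcs, hmul, hBfrac, hn2]
    nlinarith [norm_nonneg (x (n + 1) - p), hε]
  exact (tendsto_add_atTop_iff_nat 1).mp hshift
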